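/- Let (E•, M•) and (F•, N•) be decorated complexes in an abelian category A, f : (E•,M•) → (F•,N•) a morphism of decorated complexes (a chain map with f(Mⁿ) ⊆ Nⁿ for all n), and Cone(f) its decorated mapping cone (the usual mapping cone E^{•+1} ⊕ F• with direct-sum decoration M^{•+1} ⊕ N•). Then for i = -1, 0 and all n there are isomorphisms H^{i,n}(Cone(f)) ≅ H^{i,n+1}(E•,M•) ⊕ H^{i,n}(F•,N•). -/

import Mathlib

open CategoryTheory CategoryTheory.Limits

universe v u

/-- A decorated complex in an abelian category: a cochain complex together with a
graded subobject `M`, not necessarily respected by the differential. -/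
structure DecoratedComplex (A : Type u) [Category.{v} A] [Abelian A] where
  X : ℤ → A
  d : ∀ n : ℤ, X n ⟶ X (n + 1)
  d_sq : ∀ n : ℤ, d n ≫ d (n + 1) = 0
  M : ℤ → A
  ι : ∀ n : ℤ, M n ⟶ X n
  mono : ∀ n : ℤ, Mono (ι n)

namespace DecoratedComplex

variable {A : Type u} [Category.{v} A] [Abelian A] (D : DecoratedComplex A)

/-- The quotient `Eⁿ/Mⁿ`. -/
noncomputable abbrev Q (n : ℤ) : A := cokernel (D.ι n)

/-- The canonical map `Mⁿ ⟶ E^{n+1}/M^{n+1}` induced by the differential. -/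
noncomputable def φ (n : ℤ) : D.M n ⟶ D.Q (n + 1) :=
  D.ι n ≫ D.d n ≫ cokernel.π (D.ι (n + 1))

/-- `H^{-1,n}` of a decorated complex. -/
noncomputable abbrev Hneg (n : ℤ) : A := kernel (D.φ n)

/-- `H^{0,n}` of a decorated complex. -/
noncomputable abbrev Hpos (n : ℤ) : A := cokernel (D.φ n)

end DecoratedComplex

namespace DecoratedCone

variable {A : Type u} [Category.{v} A] [Abelian A]
variable (D D' : DecoratedComplex A) (f : ∀ n : ℤ, D.X n ⟶ D'.X n)

/-- The decoration mono of the decorated mapping cone: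
`M^{n+1} ⊕ Nⁿ ⟶ E^{n+1} ⊕ Fⁿ`. -/
noncomputable def coneι (n : ℤ) :
    (D.M (n + 1) ⊞ D'.M n) ⟶ (D.X (n + 1) ⊞ D'.X n) :=
  biprod.map (D.ι (n + 1)) (D'.ι n)

/-- The differential of the mapping cone: `d(e, y) = (-δe, f(e) + δy)`. -/
noncomputable def coned (n : ℤ) :
    (D.X (n + 1) ⊞ D'.X n) ⟶ (D.X (n + 1 + 1) ⊞ D'.X (n + 1)) :=
  biprod.lift (biprod.fst ≫ (-(D.d (n + 1))))
    (biprod.fst ≫ f (n + 1) + biprod.snd ≫ D'.d n)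

/-- The map `Mⁿ_{Cone} ⟶ E^{n+1}_{Cone}/M^{n+1}_{Cone}` of the decorated cone. -/
noncomputable def coneφ (n : ℤ) :
    (D.M (n + 1) ⊞ D'.M n) ⟶ cokernel (coneι D D' (n + 1)) :=
  coneι D D' n ≫ coned D D' f n ≫ cokernel.π (coneι D D' (n + 1))

end DecoratedCone

section Aux

open CategoryTheory CategoryTheory.Limits

variable {A : Type u} [Category.{v} A] [Abelian A]

private lemma myKerFst {X Y Z W : A} (f : X ⟶ Y) (g : Z ⟶ W) :
    (kernel.ι (biprod.map f g) ≫ biprod.fst) ≫ f = 0 := by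
  rw [Category.assoc, ← biprod.map_fst, kernel.condition_assoc, zero_comp]

private lemma myKerSnd {X Y Z W : A} (f : X ⟶ Y) (g : Z ⟶ W) :
    (kernel.ι (biprod.map f g) ≫ biprod.snd) ≫ g = 0 := by
  rw [Category.assoc, ← biprod.map_snd, kernel.condition_assoc, zero_comp]

private lemma myCokInl {X Y Z W : A} (f : X ⟶ Y) (g : Z ⟶ W) :
    f ≫ biprod.inl ≫ cokernel.π (biprod.map f g) = 0 := by
  rw [← biprod.inl_map_assoc f g, cokernel.condition, comp_zero]

private lemma myCokInr {X Y Z W : A} (f : X ⟶ Y) (g : Z ⟶ W) :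
    g ≫ biprod.inr ≫ cokernel.π (biprod.map f g) = 0 := by
  rw [← biprod.inr_map_assoc f g, cokernel.condition, comp_zero]

/-- kernel of a biprod.map is the biprod of kernels -/
noncomputable def myKernelBiprodMapIso {X Y Z W : A} (f : X ⟶ Y) (g : Z ⟶ W) :
    kernel (biprod.map f g) ≅ kernel f ⊞ kernel g where
  hom := biprod.lift
    (kernel.lift f (kernel.ι _ ≫ biprod.fst) (myKerFst f g))
    (kernel.lift g (kernel.ι _ ≫ biprod.snd) (myKerSnd f g))
  inv := kernel.lift _ (biprod.map (kernel.ι f) (kernel.ι g)) (by ext <;> simp)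
  hom_inv_id := by ext <;> simp
  inv_hom_id := by ext <;> simp

/-- cokernel of a biprod.map is the biprod of cokernels -/
noncomputable def myCokernelBiprodMapIso {X Y Z W : A} (f : X ⟶ Y) (g : Z ⟶ W) :
    cokernel (biprod.map f g) ≅ cokernel f ⊞ cokernel g where
  hom := cokernel.desc _ (biprod.map (cokernel.π f) (cokernel.π g)) (by ext <;> simp)
  inv := biprod.desc
    (cokernel.desc f (biprod.inl ≫ cokernel.π _) (myCokInl f g))
    (cokernel.desc g (biprod.inr ≫ cokernel.π _) (myCokInr f g))
  hom_inv_id := by ext <;> simp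
  inv_hom_id := by ext <;> simp

@[simp] private lemma myCokernelBiprodMapIso_π_hom {X Y Z W : A} (f : X ⟶ Y) (g : Z ⟶ W) :
    cokernel.π (biprod.map f g) ≫ (myCokernelBiprodMapIso f g).hom =
      biprod.map (cokernel.π f) (cokernel.π g) := by
  simp [myCokernelBiprodMapIso]

noncomputable def myKernelNegIso {X Y : A} (f : X ⟶ Y) : kernel (-f) ≅ kernel f where
  hom := kernel.lift f (kernel.ι (-f)) (by
    have := kernel.condition (-f)
    simp only [Preadditive.comp_neg, neg_eq_zero] at this
    exact this)
  inv := kernel.lift (-f) (kernel.ι f) (by simp)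

noncomputable def myCokernelNegIso {X Y : A} (f : X ⟶ Y) : cokernel (-f) ≅ cokernel f where
  hom := cokernel.desc (-f) (cokernel.π f) (by simp)
  inv := cokernel.desc f (cokernel.π (-f)) (by
    have := cokernel.condition (-f)
    simp only [Preadditive.neg_comp, neg_eq_zero] at this
    exact this)

end Aux

open DecoratedComplex DecoratedCone in
/-- `H^{i,n}(Cone(f)) ≅ H^{i,n+1}(E•,M•) ⊕ H^{i,n}(F•,N•)` for `i = -1, 0`. -/
theorem decorated_cone_cohomology {A : Type u} [Category.{v} A] [Abelian A]
    (D D' : DecoratedComplex A)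
    (f : ∀ n : ℤ, D.X n ⟶ D'.X n) (fM : ∀ n : ℤ, D.M n ⟶ D'.M n)
    (comm : ∀ n : ℤ, f n ≫ D'.d n = D.d n ≫ f (n + 1))
    (hfM : ∀ n : ℤ, fM n ≫ D'.ι n = D.ι n ≫ f n) :
    ∀ n : ℤ,
      Nonempty (kernel (coneφ D D' f n) ≅ kernel (D.φ (n + 1)) ⊞ kernel (D'.φ n)) ∧
      Nonempty (cokernel (coneφ D D' f n) ≅ cokernel (D.φ (n + 1)) ⊞ cokernel (D'.φ n)) := by
  intro n
  have h0 : D.ι (n + 1) ≫ f (n + 1) ≫ cokernel.π (D'.ι (n + 1)) = 0 := by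
    rw [← Category.assoc, ← hfM, Category.assoc, cokernel.condition, comp_zero]
  have hfact' : coneφ D D' f n ≫
      (myCokernelBiprodMapIso (D.ι (n + 1 + 1)) (D'.ι (n + 1))).hom =
      biprod.map (-(D.φ (n + 1))) (D'.φ n) := by
    apply biprod.hom_ext' <;> apply biprod.hom_ext <;>
      simp [coneφ, coneι, coned, DecoratedComplex.φ, h0,
        reassoc_of% h0]
  have hfact : coneφ D D' f n =
      biprod.map (-(D.φ (n + 1))) (D'.φ n) ≫
        (myCokernelBiprodMapIso (D.ι (n + 1 + 1)) (D'.ι (n + 1))).inv := by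
    erw [← hfact', Category.assoc, Iso.hom_inv_id, Category.comp_id]
  have : @IsIso A _ (cokernel (D.ι (n + 1 + 1)) ⊞ cokernel (D'.ι (n + 1)))
      (cokernel (coneι D D' (n + 1)))
      (myCokernelBiprodMapIso (D.ι (n + 1 + 1)) (D'.ι (n + 1))).inv :=
    Iso.isIso_inv _
  have : @Mono A _ (cokernel (D.ι (n + 1 + 1)) ⊞ cokernel (D'.ι (n + 1)))
      (cokernel (coneι D D' (n + 1)))
      (myCokernelBiprodMapIso (D.ι (n + 1 + 1)) (D'.ι (n + 1))).inv :=
    IsIso.mono_of_iso _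
  constructor
  · exact ⟨kernelIsoOfEq hfact ≪≫ kernelCompMono _ _ ≪≫
      myKernelBiprodMapIso _ _ ≪≫ biprod.mapIso (myKernelNegIso _) (Iso.refl _)⟩
  · exact ⟨cokernelIsoOfEq hfact ≪≫ cokernelCompIsIso _ _ ≪≫
      myCokernelBiprodMapIso _ _ ≪≫ biprod.mapIso (myCokernelNegIso _) (Iso.refl _)⟩
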